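/- Resonant two-qubit heat formula: for the initial density matrix ρ with entries p_{00},p_{01},p_{10},p_{11} on the diagonal and coherence η e^{iξ} in the |01⟩,|10⟩ block, evolving under U(t) = exp(-it H_I) with H_I = g(a(|01⟩⟨01|+|10⟩⟨10|) + e^{iθ}|01⟩⟨10| + e^{-iθ}|10⟩⟨01|), the average heat into qubit A with local Hamiltonian H_A = (ω/2)(1-σ_z) is ⟨Q_A⟩ = ω[(p_{01}-p_{10})sin²(gt) + η sin(2gt) sin(ξ-θ)]. -/

import Mathlib

set_option maxHeartbeats 3200000


open Matrix ComplexOrder Kronecker NormedSpace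

/-- The Pauli `Z` matrix. -/
def σz : Matrix (Fin 2) (Fin 2) ℂ := Matrix.diagonal ![1, -1]

/-- The Zeeman Hamiltonian `(ω/2)(1 - σ_z)`. -/
noncomputable def zeeman (ω : ℝ) : Matrix (Fin 2) (Fin 2) ℂ :=
  ((ω / 2 : ℝ) : ℂ) • ((1 : Matrix (Fin 2) (Fin 2) ℂ) - σz)

/-- The matrix unit `|p⟩⟨q|` on the two-qubit space. -/
def E (p q : Fin 2 × Fin 2) : Matrix (Fin 2 × Fin 2) (Fin 2 × Fin 2) ℂ :=
  Matrix.single p q 1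

/-- The general energy-conserving resonant two-qubit interaction Hamiltonian
`g(a(|01⟩⟨01|+|10⟩⟨10|) + e^{iθ}|01⟩⟨10| + e^{-iθ}|10⟩⟨01|)`. -/
noncomputable def HIres (g a θ : ℝ) : Matrix (Fin 2 × Fin 2) (Fin 2 × Fin 2) ℂ :=
  (g : ℂ) • ((a : ℂ) • (E (0, 1) (0, 1) + E (1, 0) (1, 0))
    + Complex.exp (θ * Complex.I) • E (0, 1) (1, 0)
    + Complex.exp (-θ * Complex.I) • E (1, 0) (0, 1))


private lemma exp_merge (x a b : ℂ) :
    x * Complex.exp a * Complex.exp b = x * Complex.exp (a+b) := by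
  rw [mul_assoc, ← Complex.exp_add]

private lemma exp_merge2 (a b : ℂ) :
    Complex.exp a * Complex.exp b = Complex.exp (a+b) := (Complex.exp_add a b).symm


private lemma exp_merge3 (w a b : ℂ) :
    Complex.exp a * w * Complex.exp b = w * Complex.exp (a+b) := by
  rw [mul_comm (Complex.exp a) w, mul_assoc, ← Complex.exp_add]

private lemma exp_merge4 (x w a b : ℂ) :
    x * Complex.exp a * w * Complex.exp b = x * w * Complex.exp (a+b) := by
  rw [show x * Complex.exp a * w = x * w * Complex.exp a by ring, mul_assoc, ← Complex.exp_add]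

noncomputable def Um (g a θ t : ℝ) : Matrix (Fin 2 × Fin 2) (Fin 2 × Fin 2) ℂ :=
  Matrix.of fun p q =>
    if p = ((0:Fin 2),(0:Fin 2)) then (if q = (0,0) then 1 else 0)
    else if p = (1,1) then (if q = (1,1) then 1 else 0)
    else if p = (0,1) then
      (if q = (0,1) then
        (Complex.exp ((g:ℂ)*t*a*Complex.I))⁻¹
          * ((Complex.exp ((g:ℂ)*t*Complex.I))⁻¹ + Complex.exp ((g:ℂ)*t*Complex.I)) / 2
       else if q = (1,0) then
        Complex.exp ((θ:ℂ)*Complex.I) * (Complex.exp ((g:ℂ)*t*a*Complex.I))⁻¹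
          * ((Complex.exp ((g:ℂ)*t*Complex.I))⁻¹ - Complex.exp ((g:ℂ)*t*Complex.I)) / 2
       else 0)
    else
      (if q = (0,1) then
        (Complex.exp ((θ:ℂ)*Complex.I))⁻¹ * (Complex.exp ((g:ℂ)*t*a*Complex.I))⁻¹
          * ((Complex.exp ((g:ℂ)*t*Complex.I))⁻¹ - Complex.exp ((g:ℂ)*t*Complex.I)) / 2
       else if q = (1,0) then
        (Complex.exp ((g:ℂ)*t*a*Complex.I))⁻¹
          * ((Complex.exp ((g:ℂ)*t*Complex.I))⁻¹ + Complex.exp ((g:ℂ)*t*Complex.I)) / 2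
       else 0)


noncomputable def Wm (θ : ℝ) : Matrix (Fin 2 × Fin 2) (Fin 2 × Fin 2) ℂ :=
  Matrix.of fun p q =>
    if p = ((0:Fin 2),(0:Fin 2)) then (if q = (0,0) then 1 else 0)
    else if p = (1,1) then (if q = (1,1) then 1 else 0)
    else if p = (0,1) then
      (if q = (0,1) then Complex.exp (θ * Complex.I)
       else if q = (1,0) then Complex.exp (θ * Complex.I) else 0)
    else (if q = (0,1) then 1 else if q = (1,0) then -1 else 0)

noncomputable def Wm' (θ : ℝ) : Matrix (Fin 2 × Fin 2) (Fin 2 × Fin 2) ℂ :=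
  Matrix.of fun p q =>
    if p = ((0:Fin 2),(0:Fin 2)) then (if q = (0,0) then 1 else 0)
    else if p = (1,1) then (if q = (1,1) then 1 else 0)
    else if p = (0,1) then
      (if q = (0,1) then Complex.exp (-θ * Complex.I) / 2
       else if q = (1,0) then 1/2 else 0)
    else (if q = (0,1) then Complex.exp (-θ * Complex.I) / 2
          else if q = (1,0) then -(1/2) else 0)

noncomputable def dv (g a t : ℝ) : Fin 2 × Fin 2 → ℂ := fun p =>
  if p = ((0:Fin 2),(1:Fin 2)) then (-(t*g*(a+1)) : ℝ) * Complex.I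
  else if p = (1,0) then (-(t*g*(a-1)) : ℝ) * Complex.I else 0

lemma hWW' (θ : ℝ) : Wm θ * Wm' θ = 1 := by
  have h : Complex.exp (θ * Complex.I) * Complex.exp (-θ * Complex.I) = 1 := by
    rw [← Complex.exp_add]; ring_nf; exact Complex.exp_zero
  ext p q
  fin_cases p <;> fin_cases q <;>
    simp (config := { decide := true }) [Wm, Wm', Matrix.mul_apply, Fintype.sum_prod_type,
      Fin.sum_univ_two, Matrix.one_apply] <;> ring_nf <;>
    simp_all [← Complex.exp_add] <;> ring_nf <;> simp_all [Complex.exp_zero]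


example : True := trivial

lemma hW'W (θ : ℝ) : Wm' θ * Wm θ = 1 := by
  have h : Complex.exp (-θ * Complex.I) * Complex.exp (θ * Complex.I) = 1 := by
    rw [← Complex.exp_add]; ring_nf; exact Complex.exp_zero
  ext p q
  fin_cases p <;> fin_cases q <;>
    simp (config := { decide := true }) [Wm, Wm', Matrix.mul_apply, Fintype.sum_prod_type,
      Fin.sum_univ_two, Matrix.one_apply] <;> ring_nf <;>
    simp_all [← Complex.exp_add] <;> norm_num

noncomputable def Wu (θ : ℝ) : (Matrix (Fin 2 × Fin 2) (Fin 2 × Fin 2) ℂ)ˣ :=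
  ⟨Wm θ, Wm' θ, hWW' θ, hW'W θ⟩

lemma hM (g a θ t : ℝ) :
    (-(t:ℂ) * Complex.I) • HIres g a θ = Wm θ * Matrix.diagonal (dv g a t) * Wm' θ := by
  have h : Complex.exp (θ * Complex.I) * Complex.exp (-θ * Complex.I) = 1 := by
    rw [← Complex.exp_add]; ring_nf; exact Complex.exp_zero
  ext p q
  fin_cases p <;> fin_cases q <;>
    · simp [Matrix.mul_apply, Fintype.sum_prod_type, Fin.sum_univ_two,
        Matrix.smul_apply, Matrix.add_apply, HIres, E, Matrix.single,
        Matrix.diagonal_apply, Matrix.of_apply]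
      try norm_num [Wm, Wm', dv, Matrix.of_apply, Prod.ext_iff]
      try ring
      try (ring_nf at h ⊢; linear_combination ((t:ℂ)*↑g*↑a*Complex.I) * h)

lemma hUexp (g a θ t : ℝ) :
    exp ((-(t:ℂ) * Complex.I) • HIres g a θ)
      = Wm θ * Matrix.diagonal (fun p => Complex.exp (dv g a t p)) * Wm' θ := by
  rw [hM]
  have : Wm θ * Matrix.diagonal (dv g a t) * Wm' θ
      = (Wu θ : Matrix (Fin 2 × Fin 2) (Fin 2 × Fin 2) ℂ) * Matrix.diagonal (dv g a t)
        * ((Wu θ)⁻¹ : (Matrix (Fin 2 × Fin 2) (Fin 2 × Fin 2) ℂ)ˣ) := rfl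
  rw [this, Matrix.exp_units_conj, Matrix.exp_diagonal]
  show Wm θ * Matrix.diagonal (exp (dv g a t)) * Wm' θ = _
  rw [Pi.exp_def, Complex.exp_eq_exp_ℂ]

lemma hMA (ω : ℝ) : zeeman ω ⊗ₖ (1 : Matrix (Fin 2) (Fin 2) ℂ)
    = Matrix.diagonal (fun p : Fin 2 × Fin 2 => if p.1 = 1 then (ω:ℂ) else 0) := by
  ext p q
  fin_cases p <;> fin_cases q <;>
    simp (config := { decide := true }) [zeeman, σz, Matrix.kroneckerMap_apply,
      Matrix.one_apply, Matrix.diagonal_apply, Matrix.sub_apply, Matrix.smul_apply,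
      Matrix.diagonal] <;> ring

lemma hUm (g a θ t : ℝ) :
    Wm θ * Matrix.diagonal (fun p => Complex.exp (dv g a t p)) * Wm' θ = Um g a θ t := by
  have hp : Complex.exp ((-(t*g*(a+1)) : ℝ) * Complex.I)
      = (Complex.exp ((g:ℂ)*t*a*Complex.I))⁻¹ * (Complex.exp ((g:ℂ)*t*Complex.I))⁻¹ := by
    rw [← Complex.exp_neg, ← Complex.exp_neg, ← Complex.exp_add]
    congr 1; push_cast; ring
  have hm : Complex.exp ((-(t*g*(a-1)) : ℝ) * Complex.I)
      = (Complex.exp ((g:ℂ)*t*a*Complex.I))⁻¹ * Complex.exp ((g:ℂ)*t*Complex.I) := by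
    rw [← Complex.exp_neg, ← Complex.exp_add]
    congr 1; push_cast; ring
  have hy : Complex.exp (-(θ:ℂ) * Complex.I) = (Complex.exp ((θ:ℂ)*Complex.I))⁻¹ := by
    rw [← Complex.exp_neg]; ring_nf
  ext p q
  fin_cases p <;> fin_cases q <;>
    · simp (config := { decide := true }) [Matrix.mul_apply, Fintype.sum_prod_type,
        Fin.sum_univ_two, Matrix.diagonal_apply, Matrix.of_apply, Um, Wm, Wm', dv, hp, hm, hy]
      try field_simp
      try (simp only [pow_two, ← Complex.exp_add]; ring_nf)
      try simp [← Complex.exp_add]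
      try ring_nf
      try simp [Complex.exp_zero]

noncomputable def Qm (ω g θ t : ℝ) : Matrix (Fin 2 × Fin 2) (Fin 2 × Fin 2) ℂ :=
  Matrix.of fun p q =>
    if p = ((0:Fin 2),(1:Fin 2)) then
      (if q = (0,1) then
        -(ω:ℂ) * (((Complex.exp ((g:ℂ)*t*Complex.I))⁻¹ - Complex.exp ((g:ℂ)*t*Complex.I))/2)^2
       else if q = (1,0) then
        -(ω:ℂ) * Complex.exp ((θ:ℂ)*Complex.I)
          * (((Complex.exp ((g:ℂ)*t*Complex.I))⁻¹ - Complex.exp ((g:ℂ)*t*Complex.I))/2)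
          * (((Complex.exp ((g:ℂ)*t*Complex.I))⁻¹ + Complex.exp ((g:ℂ)*t*Complex.I))/2)
       else 0)
    else if p = (1,0) then
      (if q = (0,1) then
        (ω:ℂ) * (Complex.exp ((θ:ℂ)*Complex.I))⁻¹
          * (((Complex.exp ((g:ℂ)*t*Complex.I))⁻¹ - Complex.exp ((g:ℂ)*t*Complex.I))/2)
          * (((Complex.exp ((g:ℂ)*t*Complex.I))⁻¹ + Complex.exp ((g:ℂ)*t*Complex.I))/2)
       else if q = (1,0) then
        (ω:ℂ) * (((Complex.exp ((g:ℂ)*t*Complex.I))⁻¹ + Complex.exp ((g:ℂ)*t*Complex.I))/2)^2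
          - (ω:ℂ)
       else 0)
    else 0

lemma hQ (ω g a θ t : ℝ) :
    (Um g a θ t)ᴴ * Matrix.diagonal (fun p : Fin 2 × Fin 2 => if p.1 = 1 then (ω:ℂ) else 0)
        * Um g a θ t
      - Matrix.diagonal (fun p : Fin 2 × Fin 2 => if p.1 = 1 then (ω:ℂ) else 0)
      = Qm ω g θ t := by
  ext p q
  fin_cases p <;> fin_cases q <;>
    · simp (config := { decide := true }) [Matrix.mul_apply, Matrix.sub_apply,
        Matrix.conjTranspose_apply, Matrix.mul_diagonal, Matrix.diagonal_apply,
        Fintype.sum_prod_type, Fin.sum_univ_two, Matrix.of_apply, Um, Qm,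
        Complex.star_def, _root_.map_mul, map_inv₀, map_div₀, map_sub, _root_.map_add,
        _root_.map_one, _root_.map_zero, map_ofNat, Complex.conj_ofReal, Complex.conj_I,
        ← Complex.exp_conj, mul_neg, neg_mul, Complex.exp_neg]
      try ring
      try simp only [← Complex.exp_neg, ← Complex.exp_nat_mul, exp_merge, exp_merge2,
        exp_merge3, exp_merge4]
      try ring_nf
      try simp only [← Complex.exp_neg, ← Complex.exp_nat_mul, exp_merge, exp_merge2,
        exp_merge3, exp_merge4, Complex.exp_zero]
      try ring_nf
      try simp only [Complex.exp_zero]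
      try ring

/-- Resonant two-qubit heat formula:
`⟨Q_A⟩ = ω[(p₀₁ − p₁₀)sin²(gt) + η sin(2gt) sin(ξ − θ)]`. -/
theorem resonant_heat_formula
    (ω g a θ ξ η t : ℝ) (hg : 0 < g)
    (p00 p01 p10 p11 : ℝ)
    (ρ : Matrix (Fin 2 × Fin 2) (Fin 2 × Fin 2) ℂ) (hρ : ρ.IsHermitian)
    (hρ1 : ρ.trace = 1)
    (h00 : ρ (0, 0) (0, 0) = (p00 : ℂ)) (h01 : ρ (0, 1) (0, 1) = (p01 : ℂ))
    (h10 : ρ (1, 0) (1, 0) = (p10 : ℂ)) (h11 : ρ (1, 1) (1, 1) = (p11 : ℂ))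
    (hcoh : ρ (0, 1) (1, 0) = (η : ℂ) * Complex.exp (ξ * Complex.I))
    (U : Matrix (Fin 2 × Fin 2) (Fin 2 × Fin 2) ℂ)
    (hU : U = exp ((-(t : ℂ) * Complex.I) • HIres g a θ)) :
    (ρ * (Uᴴ * (zeeman ω ⊗ₖ (1 : Matrix (Fin 2) (Fin 2) ℂ)) * U
        - zeeman ω ⊗ₖ (1 : Matrix (Fin 2) (Fin 2) ℂ))).trace
      = ((ω * ((p01 - p10) * Real.sin (g * t) ^ 2
          + η * Real.sin (2 * g * t) * Real.sin (ξ - θ)) : ℝ) : ℂ) := by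
  have hherm : ρ (1,0) (0,1) = (η:ℂ) * (Complex.exp ((ξ:ℂ) * Complex.I))⁻¹ := by
    have h := hρ.apply (1,0) (0,1)
    rw [hcoh] at h
    rw [← h]
    simp [Complex.star_def, _root_.map_mul, Complex.conj_ofReal, Complex.conj_I,
      ← Complex.exp_conj, mul_neg, Complex.exp_neg]
  have h1 : ((Real.sin (g*t) : ℝ) : ℂ)^2
      = -((Complex.exp ((g:ℂ)*t*Complex.I))⁻¹ - Complex.exp ((g:ℂ)*t*Complex.I))^2/4 := by
    rw [Complex.ofReal_sin, show ((g*t:ℝ):ℂ) = (g:ℂ)*t from by push_cast; ring,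
      Complex.sin, neg_mul, Complex.exp_neg]
    linear_combination (((Complex.exp ((g:ℂ)*t*Complex.I))⁻¹
      - Complex.exp ((g:ℂ)*t*Complex.I))^2/4) * Complex.I_sq
  have h2 : ((Real.sin (2*g*t) : ℝ) : ℂ) * ((Real.sin (ξ - θ) : ℝ) : ℂ)
      = -((Complex.exp ((g:ℂ)*t*Complex.I))^2 - ((Complex.exp ((g:ℂ)*t*Complex.I))⁻¹)^2)
        * (Complex.exp ((ξ:ℂ)*Complex.I) * (Complex.exp ((θ:ℂ)*Complex.I))⁻¹
           - (Complex.exp ((ξ:ℂ)*Complex.I))⁻¹ * Complex.exp ((θ:ℂ)*Complex.I))/4 := by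
    rw [Complex.ofReal_sin, Complex.ofReal_sin,
      show ((2*g*t:ℝ):ℂ) = 2*((g:ℂ)*t) from by push_cast; ring,
      show ((ξ - θ:ℝ):ℂ) = (ξ:ℂ) - θ from by push_cast; ring,
      Complex.sin, Complex.sin, neg_mul, neg_mul, Complex.exp_neg, Complex.exp_neg,
      show (2*((g:ℂ)*t))*Complex.I = (g:ℂ)*t*Complex.I + (g:ℂ)*t*Complex.I from by ring,
      show ((ξ:ℂ) - θ)*Complex.I = (ξ:ℂ)*Complex.I + -((θ:ℂ)*Complex.I) from by ring,
      Complex.exp_add, Complex.exp_add, Complex.exp_neg]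
    simp only [mul_inv, inv_inv]
    linear_combination (norm := ring_nf) ((Complex.exp ((g:ℂ)*t*Complex.I)*Complex.exp ((g:ℂ)*t*Complex.I)
      - (Complex.exp ((g:ℂ)*t*Complex.I))⁻¹*(Complex.exp ((g:ℂ)*t*Complex.I))⁻¹)
      * (Complex.exp ((ξ:ℂ)*Complex.I) * (Complex.exp ((θ:ℂ)*Complex.I))⁻¹
         - (Complex.exp ((ξ:ℂ)*Complex.I))⁻¹ * Complex.exp ((θ:ℂ)*Complex.I))/4) * Complex.I_sq
  rw [hU, hUexp, hUm, hMA, hQ,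
    show ((ω * ((p01 - p10) * Real.sin (g * t) ^ 2
        + η * Real.sin (2 * g * t) * Real.sin (ξ - θ)) : ℝ) : ℂ)
      = (ω:ℂ) * (((p01:ℂ) - p10) * ((Real.sin (g*t) : ℝ) : ℂ)^2
        + (η:ℂ) * (((Real.sin (2*g*t) : ℝ) : ℂ) * ((Real.sin (ξ - θ) : ℝ) : ℂ)))
      from by push_cast; ring,
    h1, h2]
  simp (config := { decide := true }) [Matrix.trace, Matrix.diag, Matrix.mul_apply,
    Fintype.sum_prod_type, Fin.sum_univ_two, Matrix.of_apply, Qm, h01, h10, hcoh, hherm]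
  ring_nf
  simp only [← Complex.exp_neg, ← Complex.exp_nat_mul, exp_merge, exp_merge2, exp_merge3, exp_merge4]
  ring_nf
  simp only [← Complex.exp_neg, ← Complex.exp_nat_mul, exp_merge, exp_merge2, Complex.exp_zero]
  try ring_nf
  try ring
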